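/- arXiv:1803.06864 — 2 statements merged into one kernel-verified Lean document; each statement's English description precedes it below -/
import Mathlib

section
/- Let Y subset R^n and x0 in Y, and define the tangent cone Tan(Y, x0) := { v in R^n \ {0} : exists sequence (v_i) in R^n \ {0} with v_i -> 0, x0 + v_i in Y, v_i/||v_i|| -> v/||v|| } union {0}. If D_x F-tilde(x, alpha) is invertible for all x in P and alpha in A(x), then Tan(P_int, x0) = Tan(P, x0) for all x0 in P_int. -/
noncomputable def grad (n : ℕ) (g : (Fin n → ℝ) → ℝ) (x : Fin n → ℝ) : Fin n → ℝ :=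
  fun j => fderiv ℝ g x (Pi.single j 1)

noncomputable def Ftilde (n K : ℕ) (f : Fin (K + 1) → (Fin n → ℝ) → ℝ)
    (p : (Fin n → ℝ) × (Fin K → ℝ)) : Fin n → ℝ :=
  (∑ i : Fin K, p.2 i •
      (grad n (f i.castSucc) p.1 - grad n (f (Fin.last K)) p.1))
    + grad n (f (Fin.last K)) p.1

def openSimplex (K : ℕ) : Set (Fin K → ℝ) := {α | (∀ i, 0 < α i) ∧ ∑ i, α i < 1}

def closedSimplex (K : ℕ) : Set (Fin K → ℝ) := {α | (∀ i, 0 ≤ α i) ∧ ∑ i, α i ≤ 1}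

noncomputable def DxFtilde (n K : ℕ) (f : Fin (K + 1) → (Fin n → ℝ) → ℝ)
    (p : (Fin n → ℝ) × (Fin K → ℝ)) : (Fin n → ℝ) →L[ℝ] (Fin n → ℝ) :=
  fderiv ℝ (fun x => Ftilde n K f (x, p.2)) p.1

def KKTset (n K : ℕ) (f : Fin (K + 1) → (Fin n → ℝ) → ℝ) (x : Fin n → ℝ) :
    Set (Fin K → ℝ) :=
  {α | α ∈ closedSimplex K ∧ Ftilde n K f (x, α) = 0}

def ParetoCritical (n K : ℕ) (f : Fin (K + 1) → (Fin n → ℝ) → ℝ) : Set (Fin n → ℝ) :=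
  {x | ∃ α, α ∈ KKTset n K f x}

def ParetoCriticalInt (n K : ℕ) (f : Fin (K + 1) → (Fin n → ℝ) → ℝ) : Set (Fin n → ℝ) :=
  {x | ∃ α ∈ openSimplex K, Ftilde n K f (x, α) = 0}

/-- The tangent cone of a set `Y` at a point `x`, via normalized difference sequences. -/
def Tan {E : Type*} [NormedAddCommGroup E] [NormedSpace ℝ E] (Y : Set E) (x : E) :
    Set E :=
  {v | v = 0 ∨ ∃ u : ℕ → E, (∀ i, u i ≠ 0) ∧
    Filter.Tendsto u Filter.atTop (nhds 0) ∧ (∀ i, x + u i ∈ Y) ∧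
    Filter.Tendsto (fun i => ‖u i‖⁻¹ • u i) Filter.atTop (nhds (‖v‖⁻¹ • v))}


open Filter Topology

lemma contDiff_grad {n : ℕ} {g : (Fin n → ℝ) → ℝ} (hg : ContDiff ℝ 2 g) :
    ContDiff ℝ 1 (grad n g) := by
  apply contDiff_pi.2
  intro j
  exact (hg.fderiv_right (by norm_num)).clm_apply contDiff_const

lemma contDiff_Ftilde (n K : ℕ) (f : Fin (K + 1) → (Fin n → ℝ) → ℝ)
    (hf : ∀ i, ContDiff ℝ 2 (f i)) : ContDiff ℝ 1 (Ftilde n K f) := by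
  unfold Ftilde
  apply ContDiff.add
  · apply ContDiff.sum
    intro i _
    exact (((ContinuousLinearMap.proj i :
        (Fin K → ℝ) →L[ℝ] ℝ).contDiff).comp contDiff_snd).smul
      (((contDiff_grad (hf i.castSucc)).sub (contDiff_grad (hf (Fin.last K)))).comp contDiff_fst)
  · exact (contDiff_grad (hf (Fin.last K))).comp contDiff_fst

lemma isCompact_closedSimplex (K : ℕ) : IsCompact (closedSimplex K) := by
  have h1 : IsCompact (Set.Icc (0 : Fin K → ℝ) 1) := isCompact_Icc
  apply h1.of_isClosed_subset
  · have : closedSimplex K = (⋂ i, {α : Fin K → ℝ | 0 ≤ α i}) ∩ {α | ∑ i, α i ≤ 1} := by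
      ext α; simp [closedSimplex, Set.mem_iInter]
    rw [this]
    exact IsClosed.inter (isClosed_iInter fun i =>
        isClosed_le continuous_const (continuous_apply i))
      (isClosed_le (by continuity) continuous_const)
  · intro α hα
    rw [Set.mem_Icc]
    constructor
    · intro i; exact hα.1 i
    · intro i
      calc α i ≤ ∑ j, α j := Finset.single_le_sum (fun j _ => hα.1 j) (Finset.mem_univ i)
        _ ≤ 1 := hα.2

lemma norm_normalize_sub_normalize {E : Type*} [NormedAddCommGroup E] [NormedSpace ℝ E]
    (a b : E) (hb : b ≠ 0) : ‖‖a‖⁻¹ • a - ‖b‖⁻¹ • b‖ ≤ 2 * ‖a - b‖ / ‖b‖ := by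
  have hbn : (0:ℝ) < ‖b‖ := norm_pos_iff.2 hb
  rcases eq_or_ne a 0 with rfl | ha
  · simp only [norm_zero, inv_zero, zero_smul, zero_sub, norm_neg, norm_smul,
      norm_inv, norm_norm]
    rw [inv_mul_cancel₀ hbn.ne', le_div_iff₀ hbn]
    nlinarith [hbn]
  · have han : (0:ℝ) < ‖a‖ := norm_pos_iff.2 ha
    have key : ‖a‖⁻¹ • a - ‖b‖⁻¹ • b = ‖b‖⁻¹ • (a - b) + (‖a‖⁻¹ - ‖b‖⁻¹) • a := by
      module
    rw [key]
    have h1 : ‖‖b‖⁻¹ • (a - b)‖ = ‖a - b‖ / ‖b‖ := by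
      rw [norm_smul, norm_inv, norm_norm]; ring
    have h2 : ‖(‖a‖⁻¹ - ‖b‖⁻¹) • a‖ ≤ ‖a - b‖ / ‖b‖ := by
      rw [norm_smul, Real.norm_eq_abs]
      have : |‖a‖⁻¹ - ‖b‖⁻¹| = |‖b‖ - ‖a‖| / (‖a‖ * ‖b‖) := by
        have he : ‖a‖⁻¹ - ‖b‖⁻¹ = (‖b‖ - ‖a‖) / (‖a‖ * ‖b‖) := by
          field_simp
        rw [he, abs_div, abs_of_pos (mul_pos han hbn)]
      rw [this]
      have hab : |‖b‖ - ‖a‖| ≤ ‖a - b‖ := by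
        rw [abs_sub_comm]; exact abs_norm_sub_norm_le a b
      rw [div_mul_eq_mul_div, div_le_div_iff₀ (mul_pos han hbn) hbn]
      calc |‖b‖ - ‖a‖| * ‖a‖ * ‖b‖ ≤ ‖a - b‖ * ‖a‖ * ‖b‖ := by
            apply mul_le_mul_of_nonneg_right (mul_le_mul_of_nonneg_right hab han.le) hbn.le
        _ = ‖a - b‖ * (‖a‖ * ‖b‖) := by ring
    calc ‖‖b‖⁻¹ • (a - b) + (‖a‖⁻¹ - ‖b‖⁻¹) • a‖
        ≤ ‖‖b‖⁻¹ • (a - b)‖ + ‖(‖a‖⁻¹ - ‖b‖⁻¹) • a‖ := norm_add_le _ _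
      _ ≤ ‖a - b‖ / ‖b‖ + ‖a - b‖ / ‖b‖ := by rw [h1]; linarith
      _ = 2 * ‖a - b‖ / ‖b‖ := by ring

lemma local_solution (n K : ℕ) (f : Fin (K + 1) → (Fin n → ℝ) → ℝ)
    (hf : ∀ i, ContDiff ℝ 2 (f i)) (x₀ : Fin n → ℝ) (αs : Fin K → ℝ)
    (hF0 : Ftilde n K f (x₀, αs) = 0) (hunit : IsUnit (DxFtilde n K f (x₀, αs))) :
    ∃ Ψ : (Fin n → ℝ) × (Fin K → ℝ) → (Fin n → ℝ) × (Fin K → ℝ),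
      ∃ (L : NNReal) (s : Set ((Fin n → ℝ) × (Fin K → ℝ))),
        s ∈ 𝓝 ((0 : Fin n → ℝ), αs) ∧ LipschitzOnWith L Ψ s ∧
        (∀ᶠ p in 𝓝 (x₀, αs), Ψ (Ftilde n K f p, p.2) = p) ∧
        (∀ᶠ q in 𝓝 ((0 : Fin n → ℝ), αs),
          Ftilde n K f (Ψ q) = q.1 ∧ (Ψ q).2 = q.2) := by
  classical
  have hF : ContDiff ℝ 1 (Ftilde n K f) := contDiff_Ftilde n K f hf
  set DF : ((Fin n → ℝ) × (Fin K → ℝ)) →L[ℝ] (Fin n → ℝ) :=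
    fderiv ℝ (Ftilde n K f) (x₀, αs) with hDF
  have hFs : HasStrictFDerivAt (Ftilde n K f) DF (x₀, αs) :=
    hF.contDiffAt.hasStrictFDerivAt one_ne_zero
  set J : (Fin n → ℝ) →L[ℝ] (Fin n → ℝ) × (Fin K → ℝ) :=
    (ContinuousLinearMap.id ℝ (Fin n → ℝ)).prod 0 with hJ
  have hcomp : HasFDerivAt (fun x : Fin n → ℝ => Ftilde n K f (x, αs)) (DF.comp J) x₀ := by
    have h2 : HasFDerivAt (fun x : Fin n → ℝ => (x, αs)) J x₀ :=
      (hasFDerivAt_id x₀).prodMk (hasFDerivAt_const αs x₀)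
    exact hFs.hasFDerivAt.comp x₀ h2
  have hDx : DxFtilde n K f (x₀, αs) = DF.comp J := hcomp.fderiv
  obtain ⟨u, huu⟩ := hunit
  have huc : (↑u : (Fin n → ℝ) →L[ℝ] (Fin n → ℝ)) = DF.comp J := by rw [huu, hDx]
  set T : ((Fin n → ℝ) × (Fin K → ℝ)) →L[ℝ] ((Fin n → ℝ) × (Fin K → ℝ)) :=
    DF.prod (ContinuousLinearMap.snd ℝ (Fin n → ℝ) (Fin K → ℝ)) with hT
  set S : ((Fin n → ℝ) × (Fin K → ℝ)) →L[ℝ] ((Fin n → ℝ) × (Fin K → ℝ)) :=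
    ((↑u⁻¹ : (Fin n → ℝ) →L[ℝ] (Fin n → ℝ)).comp
      ((ContinuousLinearMap.fst ℝ (Fin n → ℝ) (Fin K → ℝ)) -
        DF.comp ((ContinuousLinearMap.inr ℝ (Fin n → ℝ) (Fin K → ℝ)).comp
          (ContinuousLinearMap.snd ℝ (Fin n → ℝ) (Fin K → ℝ))))).prod
      (ContinuousLinearMap.snd ℝ (Fin n → ℝ) (Fin K → ℝ)) with hS
  have hDFsplit : ∀ p : (Fin n → ℝ) × (Fin K → ℝ), DF p = DF (p.1, 0) + DF (0, p.2) := by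
    intro p
    rw [← map_add]
    congr 1
    simp
  have huapp : ∀ v : Fin n → ℝ, (↑u : (Fin n → ℝ) →L[ℝ] (Fin n → ℝ)) v = DF (v, 0) := by
    intro v
    rw [huc]
    rfl
  have hui : ∀ v : Fin n → ℝ,
      (↑u⁻¹ : (Fin n → ℝ) →L[ℝ] (Fin n → ℝ)) ((↑u : (Fin n → ℝ) →L[ℝ] (Fin n → ℝ)) v) = v := by
    intro v
    have h := DFunLike.congr_fun u.inv_mul v
    simpa only [ContinuousLinearMap.mul_apply, ContinuousLinearMap.one_apply] using h
  have hiu : ∀ v : Fin n → ℝ,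
      (↑u : (Fin n → ℝ) →L[ℝ] (Fin n → ℝ)) ((↑u⁻¹ : (Fin n → ℝ) →L[ℝ] (Fin n → ℝ)) v) = v := by
    intro v
    have h := DFunLike.congr_fun u.mul_inv v
    simpa only [ContinuousLinearMap.mul_apply, ContinuousLinearMap.one_apply] using h
  have hleft : Function.LeftInverse S T := by
    intro p
    have h1 : T p = (DF p, p.2) := rfl
    have h2 : S (DF p, p.2)
        = ((↑u⁻¹ : (Fin n → ℝ) →L[ℝ] (Fin n → ℝ)) (DF p - DF (0, p.2)), p.2) := rfl
    rw [h1, h2]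
    have h3 : DF p - DF (0, p.2) = DF (p.1, 0) := by rw [hDFsplit p]; abel
    rw [h3, ← huapp, hui]
  have hright : Function.RightInverse S T := by
    intro q
    have h1 : S q = ((↑u⁻¹ : (Fin n → ℝ) →L[ℝ] (Fin n → ℝ)) (q.1 - DF (0, q.2)), q.2) := rfl
    have h2 : ∀ p : (Fin n → ℝ) × (Fin K → ℝ), T p = (DF p, p.2) := fun _ => rfl
    rw [h1, h2]
    rw [Prod.mk.injEq]
    refine ⟨?_, rfl⟩
    rw [hDFsplit ((↑u⁻¹ : (Fin n → ℝ) →L[ℝ] (Fin n → ℝ)) (q.1 - DF (0, q.2)), q.2)]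
    rw [← huapp, hiu]
    abel
  set e : ((Fin n → ℝ) × (Fin K → ℝ)) ≃L[ℝ] ((Fin n → ℝ) × (Fin K → ℝ)) :=
    ContinuousLinearEquiv.equivOfInverse T S hleft hright with he
  have hcoe : (e : ((Fin n → ℝ) × (Fin K → ℝ)) →L[ℝ] ((Fin n → ℝ) × (Fin K → ℝ))) = T := rfl
  have hΦ : HasStrictFDerivAt (fun p : (Fin n → ℝ) × (Fin K → ℝ) => (Ftilde n K f p, p.2))
      (e : ((Fin n → ℝ) × (Fin K → ℝ)) →L[ℝ] ((Fin n → ℝ) × (Fin K → ℝ))) (x₀, αs) := by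
    rw [hcoe, hT]
    exact hFs.prodMk (ContinuousLinearMap.snd ℝ (Fin n → ℝ) (Fin K → ℝ)).hasStrictFDerivAt
  set Ψ := hΦ.localInverse _ e (x₀, αs) with hΨdef
  have hΦp0 : (Ftilde n K f (x₀, αs), αs) = ((0 : Fin n → ℝ), αs) := by rw [hF0]
  have hΨs : HasStrictFDerivAt Ψ
      (e.symm : ((Fin n → ℝ) × (Fin K → ℝ)) →L[ℝ] ((Fin n → ℝ) × (Fin K → ℝ)))
      ((0 : Fin n → ℝ), αs) := by
    rw [← hΦp0]; exact hΦ.to_localInverse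
  obtain ⟨L, s, hs, hlip⟩ := hΨs.exists_lipschitzOnWith
  refine ⟨Ψ, L, s, hs, hlip, ?_, ?_⟩
  · exact hΦ.eventually_left_inverse
  · have h := hΦ.eventually_right_inverse
    rw [hΦp0] at h
    filter_upwards [h] with q hq
    rw [Prod.ext_iff] at hq
    exact hq

/-- if `D_x F̃(x,α)` is invertible for all `x ∈ P` and `α ∈ A(x)`, then the
tangent cones of `P_int` and `P` coincide at every point of `P_int`. -/
theorem tan_Pint_eq_tan_P (n K : ℕ) (hK : 0 < K)
    (f : Fin (K + 1) → (Fin n → ℝ) → ℝ) (hf : ∀ i, ContDiff ℝ 2 (f i))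
    (hinv : ∀ x ∈ ParetoCritical n K f, ∀ α ∈ KKTset n K f x,
      IsUnit (DxFtilde n K f (x, α))) :
    ∀ x₀ ∈ ParetoCriticalInt n K f,
      Tan (ParetoCriticalInt n K f) x₀ = Tan (ParetoCritical n K f) x₀ := by
  intro x₀ hx₀
  obtain ⟨α₀, hα₀o, hα₀F⟩ := hx₀
  have hsub : openSimplex K ⊆ closedSimplex K := fun α hα =>
    ⟨fun i => (hα.1 i).le, hα.2.le⟩
  have hPsub : ParetoCriticalInt n K f ⊆ ParetoCritical n K f := by
    rintro x ⟨α, hαo, hαF⟩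
    exact ⟨α, hsub hαo, hαF⟩
  have hx₀P : x₀ ∈ ParetoCritical n K f := hPsub ⟨α₀, hα₀o, hα₀F⟩
  apply Set.Subset.antisymm
  · rintro v (rfl | ⟨w, h1, h2, h3, h4⟩)
    · exact Or.inl rfl
    · exact Or.inr ⟨w, h1, h2, fun i => hPsub (h3 i), h4⟩
  · rintro v (rfl | ⟨u, hu0, hu, huP, hun⟩)
    · exact Or.inl rfl
    right
    choose αseq hαseq using huP
    obtain ⟨αs, hαsC, φ, hφ, hαφ⟩ := (isCompact_closedSimplex K).tendsto_subseq
      (fun i => (hαseq i).1)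
    set u' : ℕ → Fin n → ℝ := u ∘ φ with hu'def
    set α' : ℕ → Fin K → ℝ := (fun i => αseq i) ∘ φ with hα'def
    have hα'C : ∀ i, α' i ∈ closedSimplex K := fun i => (hαseq (φ i)).1
    have hα'F : ∀ i, Ftilde n K f (x₀ + u' i, α' i) = 0 := fun i => (hαseq (φ i)).2
    have hu'0 : ∀ i, u' i ≠ 0 := fun i => hu0 (φ i)
    have hu't : Tendsto u' atTop (𝓝 0) := hu.comp hφ.tendsto_atTop
    have hα't : Tendsto α' atTop (𝓝 αs) := hαφ
    have hx't : Tendsto (fun i => x₀ + u' i) atTop (𝓝 x₀) := by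
      have h := hu't.const_add x₀
      simpa using h
    have hcont : Continuous (Ftilde n K f) := (contDiff_Ftilde n K f hf).continuous
    have hFαs : Ftilde n K f (x₀, αs) = 0 := by
      have ht : Tendsto (fun i => Ftilde n K f (x₀ + u' i, α' i)) atTop
          (𝓝 (Ftilde n K f (x₀, αs))) :=
        (hcont.tendsto _).comp (hx't.prodMk_nhds hα't)
      have ht0 : Tendsto (fun i => Ftilde n K f (x₀ + u' i, α' i)) atTop (𝓝 0) := by
        simp only [hα'F]
        exact tendsto_const_nhds
      exact tendsto_nhds_unique ht ht0
    have hunit := hinv x₀ hx₀P αs ⟨hαsC, hFαs⟩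
    obtain ⟨Ψ, L, s, hs, hlip, hleftI, hrightI⟩ := local_solution n K f hf x₀ αs hFαs hunit
    -- perturbation parameters
    set t : ℕ → ℝ := fun i =>
      min ((i + 1 : ℝ)⁻¹) (‖u' i‖ / ((i + 1) * ((L : ℝ) * ‖α₀ - α' i‖ + 1))) with htdef
    have hip : ∀ i : ℕ, (0:ℝ) < (i:ℝ) + 1 := fun i => by positivity
    have hden : ∀ i : ℕ, (0:ℝ) < ((i:ℝ) + 1) * ((L : ℝ) * ‖α₀ - α' i‖ + 1) := by
      intro i
      have h2 : (0:ℝ) < (L : ℝ) * ‖α₀ - α' i‖ + 1 := by positivity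
      exact mul_pos (hip i) h2
    have htpos : ∀ i, 0 < t i := by
      intro i
      apply lt_min
      · positivity
      · exact div_pos (norm_pos_iff.2 (hu'0 i)) (hden i)
    have htle1 : ∀ i, t i ≤ 1 := by
      intro i
      refine (min_le_left _ _).trans ?_
      rw [inv_le_one_iff₀]
      right
      have := hip i
      linarith
    have htinv : ∀ i, t i ≤ ((i:ℝ)+1)⁻¹ := fun i => min_le_left _ _
    set β : ℕ → Fin K → ℝ := fun i => α' i + t i • (α₀ - α' i) with hβdef
    have hβsub : ∀ i, β i - α' i = t i • (α₀ - α' i) := by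
      intro i
      show α' i + t i • (α₀ - α' i) - α' i = t i • (α₀ - α' i)
      exact add_sub_cancel_left _ _
    have hβnorm : ∀ i, ‖β i - α' i‖ = t i * ‖α₀ - α' i‖ := by
      intro i
      rw [hβsub i, norm_smul, Real.norm_eq_abs, abs_of_pos (htpos i)]
    have hβo : ∀ i, β i ∈ openSimplex K := by
      intro i
      constructor
      · intro j
        have h1 : β i j = (1 - t i) * α' i j + t i * α₀ j := by
          simp only [hβdef, Pi.add_apply, Pi.smul_apply, Pi.sub_apply, smul_eq_mul]
          ring
        rw [h1]
        have h2 := (hα'C i).1 j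
        have h3 := hα₀o.1 j
        have h4 := htpos i
        have h5 := htle1 i
        nlinarith
      · have hsum : ∑ j, β i j
            = (1 - t i) * (∑ j, α' i j) + t i * (∑ j, α₀ j) := by
          simp only [hβdef, Pi.add_apply, Pi.smul_apply, Pi.sub_apply, smul_eq_mul]
          rw [Finset.sum_add_distrib, ← Finset.mul_sum]
          rw [Finset.sum_sub_distrib]
          ring
        rw [hsum]
        have h2 := (hα'C i).2
        have h3 := hα₀o.2
        have h4 := htpos i
        have h5 := htle1 i
        nlinarith
    have hβt : Tendsto β atTop (𝓝 αs) := by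
      have hz : Tendsto (fun i => t i • (α₀ - α' i)) atTop (𝓝 0) := by
        apply squeeze_zero_norm (a := fun i : ℕ => (1 / ((i:ℝ)+1)) * ‖α₀ - α' i‖)
        · intro i
          rw [norm_smul, Real.norm_eq_abs, abs_of_pos (htpos i), one_div]
          exact mul_le_mul_of_nonneg_right (htinv i) (norm_nonneg _)
        · have h1 : Tendsto (fun i : ℕ => 1 / ((i:ℝ)+1)) atTop (𝓝 0) :=
            tendsto_one_div_add_atTop_nhds_zero_nat
          have h2 : Tendsto (fun i => ‖α₀ - α' i‖) atTop (𝓝 ‖α₀ - αs‖) :=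
            (tendsto_const_nhds.sub hα't).norm
          have := h1.mul h2
          simpa using this
      have := hα't.add hz
      simpa using this
    -- key quantitative estimate
    have hkey : ∀ i, (L : ℝ) * ‖β i - α' i‖ ≤ ‖u' i‖ / ((i:ℝ)+1) := by
      intro i
      rw [hβnorm i]
      have h1 : t i ≤ ‖u' i‖ / (((i:ℝ)+1) * ((L:ℝ) * ‖α₀ - α' i‖ + 1)) := min_le_right _ _
      have hLC : (0:ℝ) ≤ (L:ℝ) * ‖α₀ - α' i‖ := by positivity
      calc (L : ℝ) * (t i * ‖α₀ - α' i‖)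
          = t i * ((L:ℝ) * ‖α₀ - α' i‖) := by ring
        _ ≤ (‖u' i‖ / (((i:ℝ)+1) * ((L:ℝ) * ‖α₀ - α' i‖ + 1))) * ((L:ℝ) * ‖α₀ - α' i‖) :=
            mul_le_mul_of_nonneg_right h1 hLC
        _ ≤ ‖u' i‖ / ((i:ℝ)+1) := by
            rw [div_mul_eq_mul_div, div_le_div_iff₀ (hden i) (hip i)]
            have hu'n : (0:ℝ) ≤ ‖u' i‖ := norm_nonneg _
            nlinarith [hip i]
    -- eventual facts
    have hq't : Tendsto (fun i => ((0 : Fin n → ℝ), β i)) atTop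
        (𝓝 ((0 : Fin n → ℝ), αs)) := tendsto_const_nhds.prodMk_nhds hβt
    have hr't : Tendsto (fun i => ((0 : Fin n → ℝ), α' i)) atTop
        (𝓝 ((0 : Fin n → ℝ), αs)) := tendsto_const_nhds.prodMk_nhds hα't
    have e1 : ∀ᶠ i in atTop,
        Ψ (Ftilde n K f (x₀ + u' i, α' i), α' i) = (x₀ + u' i, α' i) :=
      (hx't.prodMk_nhds hα't).eventually hleftI
    have e2 : ∀ᶠ i in atTop,
        Ftilde n K f (Ψ ((0 : Fin n → ℝ), β i)) = (0 : Fin n → ℝ) ∧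
          (Ψ ((0 : Fin n → ℝ), β i)).2 = β i := hq't.eventually hrightI
    have e3 : ∀ᶠ i in atTop, ((0 : Fin n → ℝ), β i) ∈ s := hq't.eventually_mem hs
    have e4 : ∀ᶠ i in atTop, ((0 : Fin n → ℝ), α' i) ∈ s := hr't.eventually_mem hs
    obtain ⟨N0, hN⟩ := eventually_atTop.mp ((e1.and (e2.and (e3.and e4))))
    set N : ℕ := max N0 1 with hNdef
    have hNle : ∀ i : ℕ, N0 ≤ i + N := fun i => (le_max_left _ _).trans (Nat.le_add_left _ _)
    have hN1 : ∀ i : ℕ, 1 ≤ i + N := fun i => (le_max_right _ _).trans (Nat.le_add_left _ _)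
    set w : ℕ → Fin n → ℝ := fun i => (Ψ ((0 : Fin n → ℝ), β (i + N))).1 - x₀ with hwdef
    -- per-index quantitative facts
    have key : ∀ i : ℕ, ‖w i - u' (i + N)‖ ≤ ‖u' (i + N)‖ / ((i:ℝ) + (N:ℝ) + 1) := by
      intro i
      obtain ⟨H1, H2, H3, H4⟩ := hN (i + N) (hNle i)
      have hΨα' : Ψ ((0 : Fin n → ℝ), α' (i + N)) = (x₀ + u' (i + N), α' (i + N)) := by
        rw [← hα'F (i + N)]
        exact H1
      have hd : dist (Ψ ((0:Fin n → ℝ), β (i+N))) (Ψ ((0:Fin n → ℝ), α' (i+N)))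
          ≤ (L : ℝ) * dist ((0:Fin n → ℝ), β (i+N)) ((0:Fin n → ℝ), α' (i+N)) :=
        hlip.dist_le_mul _ H3 _ H4
      have hd2 : dist ((0:Fin n → ℝ), β (i+N)) ((0:Fin n → ℝ), α' (i+N))
          = ‖β (i+N) - α' (i+N)‖ := by
        rw [Prod.dist_eq, dist_self, dist_eq_norm]
        exact max_eq_right (norm_nonneg _)
      have hfst : ‖w i - u' (i + N)‖
          ≤ dist (Ψ ((0:Fin n → ℝ), β (i+N))) (Ψ ((0:Fin n → ℝ), α' (i+N))) := by
        have hΨ1 : (Ψ ((0:Fin n → ℝ), α' (i+N))).1 = x₀ + u' (i + N) := by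
          rw [hΨα']
        have hw2 : w i - u' (i + N)
            = (Ψ ((0:Fin n → ℝ), β (i+N))).1 - (Ψ ((0:Fin n → ℝ), α' (i+N))).1 := by
          rw [hΨ1]
          show ((Ψ ((0:Fin n → ℝ), β (i+N))).1 - x₀) - u' (i + N) = _
          rw [sub_sub]
        rw [hw2, ← dist_eq_norm]
        rw [Prod.dist_eq]
        exact le_max_left _ _
      have hcast : ((i + N : ℕ) : ℝ) = (i:ℝ) + (N:ℝ) := by push_cast; ring
      calc ‖w i - u' (i + N)‖
          ≤ (L : ℝ) * ‖β (i+N) - α' (i+N)‖ := by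
            rw [← hd2]; exact hfst.trans hd
        _ ≤ ‖u' (i+N)‖ / (((i+N : ℕ):ℝ) + 1) := hkey (i+N)
        _ = ‖u' (i+N)‖ / ((i:ℝ) + (N:ℝ) + 1) := by rw [hcast]
    have hfrac : ∀ i : ℕ, ‖u' (i + N)‖ / ((i:ℝ) + (N:ℝ) + 1) ≤ ‖u' (i+N)‖ / 2 := by
      intro i
      apply div_le_div_of_nonneg_left (norm_nonneg _) (by norm_num)
      have h1 : (1:ℝ) ≤ (N:ℝ) := by exact_mod_cast hN1 0 |>.trans (by simp)
      have : (0:ℝ) ≤ (i:ℝ) := Nat.cast_nonneg i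
      linarith
    have hw0 : ∀ i, w i ≠ 0 := by
      intro i h0
      have h1 := key i
      rw [h0] at h1
      have h2 := (hfrac i)
      have h3 : ‖(0 : Fin n → ℝ) - u' (i+N)‖ = ‖u' (i+N)‖ := by
        rw [zero_sub, norm_neg]
      rw [h3] at h1
      have h4 : (0:ℝ) < ‖u' (i+N)‖ := norm_pos_iff.2 (hu'0 (i+N))
      linarith [h1.trans h2]
    have hwt : Tendsto w atTop (𝓝 0) := by
      apply squeeze_zero_norm (a := fun i : ℕ => 2 * ‖u' (i + N)‖)
      · intro i
        have h1 := key i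
        have h2 := hfrac i
        have h3 : ‖w i‖ ≤ ‖w i - u' (i+N)‖ + ‖u' (i+N)‖ := by
          have := norm_add_le (w i - u' (i+N)) (u' (i+N))
          simpa using this
        have h4 : (0:ℝ) ≤ ‖u' (i+N)‖ := norm_nonneg _
        linarith [h1.trans h2]
      · have h5 : Tendsto (fun i : ℕ => u' (i + N)) atTop (𝓝 0) :=
          hu't.comp (tendsto_add_atTop_nat N)
        have := (h5.norm.const_mul 2)
        simpa using this
    have hwP : ∀ i, x₀ + w i ∈ ParetoCriticalInt n K f := by
      intro i
      obtain ⟨H1, H2, H3, H4⟩ := hN (i + N) (hNle i)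
      refine ⟨β (i + N), hβo (i + N), ?_⟩
      have hx : x₀ + w i = (Ψ ((0 : Fin n → ℝ), β (i + N))).1 := by
        show x₀ + ((Ψ ((0 : Fin n → ℝ), β (i + N))).1 - x₀) = _
        rw [add_comm, sub_add_cancel]
      rw [hx]
      have hpair : Ψ ((0 : Fin n → ℝ), β (i + N))
          = ((Ψ ((0 : Fin n → ℝ), β (i + N))).1, β (i + N)) :=
        Prod.ext rfl H2.2
      rw [← hpair]
      exact H2.1
    have hnorm : Tendsto (fun i => ‖w i‖⁻¹ • w i) atTop (𝓝 (‖v‖⁻¹ • v)) := by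
      have htarget : Tendsto (fun i => ‖u' (i+N)‖⁻¹ • u' (i+N)) atTop (𝓝 (‖v‖⁻¹ • v)) := by
        have h1 : Tendsto (fun i => ‖u' i‖⁻¹ • u' i) atTop (𝓝 (‖v‖⁻¹ • v)) :=
          hun.comp hφ.tendsto_atTop
        exact h1.comp (tendsto_add_atTop_nat N)
      have hdiff : Tendsto (fun i => ‖w i‖⁻¹ • w i - ‖u' (i+N)‖⁻¹ • u' (i+N)) atTop (𝓝 0) := by
        apply squeeze_zero_norm (a := fun i : ℕ => 2 / ((i:ℝ) + 1))
        · intro i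
          have h1 : ‖‖w i‖⁻¹ • w i - ‖u' (i+N)‖⁻¹ • u' (i+N)‖
              ≤ 2 * ‖w i - u' (i+N)‖ / ‖u' (i+N)‖ :=
            norm_normalize_sub_normalize _ _ (hu'0 (i+N))
          have h4 : (0:ℝ) < ‖u' (i+N)‖ := norm_pos_iff.2 (hu'0 (i+N))
          have h2 : 2 * ‖w i - u' (i+N)‖ / ‖u' (i+N)‖ ≤ 2 / ((i:ℝ) + (N:ℝ) + 1) := by
            rw [div_le_div_iff₀ h4 (by positivity)]
            have h6 : ‖w i - u' (i+N)‖ * ((i:ℝ) + (N:ℝ) + 1) ≤ ‖u' (i+N)‖ :=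
              (le_div_iff₀ (by positivity)).mp (key i)
            nlinarith [h6]
          have h3 : 2 / ((i:ℝ) + (N:ℝ) + 1) ≤ 2 / ((i:ℝ) + 1) := by
            apply div_le_div_of_nonneg_left (by norm_num) (by positivity)
            have : (0:ℝ) ≤ (N:ℝ) := Nat.cast_nonneg N
            linarith
          linarith [h1.trans h2]
        · have h1 : Tendsto (fun i : ℕ => 1 / ((i:ℝ)+1)) atTop (𝓝 0) :=
            tendsto_one_div_add_atTop_nhds_zero_nat
          have := h1.const_mul 2
          simp only [mul_one_div] at this
          simpa using this
      have := htarget.add hdiff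
      simp only [add_sub_cancel] at this
      simpa using this
    exact ⟨w, hw0, hwt, hwP, hnorm⟩
end

section
/- If x0 is a Pareto critical point and rank(Df(x0)) < k - 1, then there exists a KKT multiplier alpha of x0 with at least one component equal to zero. -/
noncomputable def Jac (n k : ℕ) (f : Fin k → (Fin n → ℝ) → ℝ) (x : Fin n → ℝ) :
    Matrix (Fin k) (Fin n) ℝ :=
  Matrix.of fun i j => fderiv ℝ (f i) x (Pi.single j 1)

def IsKKTMultiplier (n k : ℕ) (f : Fin k → (Fin n → ℝ) → ℝ) (x : Fin n → ℝ)
    (α : Fin k → ℝ) : Prop :=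
  (∀ i, 0 ≤ α i) ∧ ∑ i, α i = 1 ∧ (∑ i, α i • fderiv ℝ (f i) x) = 0

-- bridging lemma
lemma sum_smul_fderiv_eq_zero_iff (n k : ℕ) (f : Fin k → (Fin n → ℝ) → ℝ)
    (x : Fin n → ℝ) (w : Fin k → ℝ) :
    (∑ i, w i • fderiv ℝ (f i) x) = 0 ↔ (Jac n k f x).vecMul w = 0 := by
  constructor
  · intro h
    funext j
    have := congrArg (fun L : (Fin n → ℝ) →L[ℝ] ℝ => L (Pi.single j 1)) h
    simpa [Matrix.vecMul, dotProduct, Jac, ContinuousLinearMap.sum_apply,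
      mul_comm] using this
  · intro h
    apply ContinuousLinearMap.coe_injective
    apply Module.Basis.ext (Pi.basisFun ℝ (Fin n))
    intro j
    have := congrFun h j
    simpa [Matrix.vecMul, dotProduct, Jac, ContinuousLinearMap.sum_apply,
      Pi.basisFun_apply, mul_comm] using this

/-- a Pareto critical point with `rank Df(x₀) < k - 1` admits a KKT
multiplier with a zero component. -/
theorem exists_multiplier_with_zero_component (n k : ℕ)
    (f : Fin k → (Fin n → ℝ) → ℝ) (hf : ∀ i, ContDiff ℝ 1 (f i))
    (x₀ : Fin n → ℝ) (hcrit : ∃ α, IsKKTMultiplier n k f x₀ α)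
    (hrank : (Jac n k f x₀).rank < k - 1) :
    ∃ α, IsKKTMultiplier n k f x₀ α ∧ ∃ i, α i = 0 := by
  obtain ⟨α, hα0, hα1, hαD⟩ := hcrit
  set M := Jac n k f x₀ with hM
  set L := M.vecMulLinear with hL
  -- rank-nullity: finrank ker L ≥ 2
  have hrn : Module.finrank ℝ (LinearMap.range L) + Module.finrank ℝ (LinearMap.ker L) = k := by
    simpa using LinearMap.finrank_range_add_finrank_ker L
  have hrange : Module.finrank ℝ (LinearMap.range L) = M.rank := by
    rw [hL, ← Matrix.mulVecLin_transpose, ← Matrix.rank_transpose M]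
    rfl
  have hker2 : 2 ≤ Module.finrank ℝ (LinearMap.ker L) := by
    rw [hrange] at hrn
    omega
  -- the sum functional restricted to ker L
  let s : (Fin k → ℝ) →ₗ[ℝ] ℝ := ∑ i, LinearMap.proj i
  have hs : ∀ w : Fin k → ℝ, s w = ∑ i, w i := by
    intro w; simp [s, LinearMap.sum_apply]
  let s' := s.domRestrict (LinearMap.ker L)
  have hkers' : 1 ≤ Module.finrank ℝ (LinearMap.ker s') := by
    have h1 : Module.finrank ℝ (LinearMap.range s') ≤ 1 := by
      simpa using Submodule.finrank_le (LinearMap.range s')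
    have := LinearMap.finrank_range_add_finrank_ker s'
    omega
  have : ∃ v : LinearMap.ker s', v ≠ 0 := by
    have : 0 < Module.finrank ℝ (LinearMap.ker s') := hkers'
    obtain ⟨v, hv⟩ := (Module.finrank_pos_iff_exists_ne_zero (R := ℝ) (M := LinearMap.ker s')).mp this
    exact ⟨v, hv⟩
  obtain ⟨⟨⟨v, hvker⟩, hvs⟩, hvne⟩ := this
  have hvne' : v ≠ 0 := by
    intro h
    apply hvne
    ext
    simp [h]
  have hvsum : ∑ i, v i = 0 := by
    have : s v = 0 := by simpa [s'] using hvs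
    rwa [hs] at this
  have hvD : (∑ i, v i • fderiv ℝ (f i) x₀) = 0 := by
    rw [sum_smul_fderiv_eq_zero_iff]
    simpa [hL, Matrix.vecMulLinear_apply] using hvker
  -- v has a negative component
  have hneg : ∃ i, v i < 0 := by
    by_contra h
    push_neg at h
    have hz : ∀ i, v i = 0 := by
      intro i
      have := Finset.sum_eq_zero_iff_of_nonneg (fun i _ => h i) |>.mp hvsum i (Finset.mem_univ i)
      exact this
    exact hvne' (funext hz)
  -- minimize α i / (-v i) over negative components
  set T : Finset (Fin k) := Finset.univ.filter (fun i => v i < 0) with hT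
  have hTne : T.Nonempty := by
    obtain ⟨i, hi⟩ := hneg
    exact ⟨i, by simp [hT, hi]⟩
  obtain ⟨i₀, hi₀T, hi₀min⟩ := T.exists_min_image (fun i => α i / (-v i)) hTne
  have hvi₀ : v i₀ < 0 := by simpa [hT] using hi₀T
  set t := α i₀ / (-v i₀) with ht
  have ht0 : 0 ≤ t := div_nonneg (hα0 i₀) (by linarith)
  refine ⟨fun i => α i + t * v i, ⟨?_, ?_, ?_⟩, ⟨i₀, ?_⟩⟩
  · intro i
    show 0 ≤ α i + t * v i
    have hαi := hα0 i
    rcases lt_or_ge (v i) 0 with hvi | hvi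
    · have hmin : t ≤ α i / (-v i) := hi₀min i (by simp [hT, hvi])
      have : t * (-v i) ≤ α i := by
        rw [← le_div_iff₀ (by linarith)]
        exact hmin
      linarith
    · have := mul_nonneg ht0 hvi
      linarith
  · rw [Finset.sum_add_distrib, hα1, ← Finset.mul_sum, hvsum]
    ring
  · show (∑ i, (α i + t * v i) • fderiv ℝ (f i) x₀) = 0
    rw [sum_smul_fderiv_eq_zero_iff]
    have hA : M.vecMul α = 0 := (sum_smul_fderiv_eq_zero_iff n k f x₀ α).mp hαD
    have hV : M.vecMul v = 0 := (sum_smul_fderiv_eq_zero_iff n k f x₀ v).mp hvD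
    funext j
    have hAj := congrFun hA j
    have hVj := congrFun hV j
    simp only [Matrix.vecMul, dotProduct, Pi.zero_apply] at hAj hVj ⊢
    calc ∑ i, (α i + t * v i) * M i j
        = (∑ i, α i * M i j) + t * ∑ i, v i * M i j := by
          rw [Finset.mul_sum, ← Finset.sum_add_distrib]
          congr 1; funext i; ring
      _ = 0 := by rw [hAj, hVj]; ring
  · show α i₀ + t * v i₀ = 0
    have hne : v i₀ ≠ 0 := ne_of_lt hvi₀
    rw [ht, div_mul_eq_mul_div, div_neg, mul_div_assoc, div_self hne, mul_one,
      add_neg_cancel]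
end
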